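/- There exist an NFA cover automaton A for a finite language L, states p, q of A with p ∼_A q and level(p) ≤ level(q), such that weakly merging q into p (collapsing q onto p, consolidating both incoming and outgoing transitions) does not yield a cover automaton for L. -/

import Mathlib

/-- `A` is an NFA cover automaton for `L` with length bound `l`. -/
def IsCoverN {α σ : Type*} (A : NFA α σ) (L : Language α) (l : ℕ) : Prop :=
  ∀ w : List α, w.length ≤ l → (w ∈ A.accepts ↔ w ∈ L)

/-- The level of a state: the length of a shortest word reaching it
(`⊤` if it is unreachable). -/
noncomputable def nfaLevel {α σ : Type*} (A : NFA α σ) (s : σ) : ℕ∞ :=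
  ⨅ w ∈ {w : List α | s ∈ A.eval w}, (w.length : ℕ∞)

/-- Acceptance of a word starting from the single state `s`. -/
def AccFrom {α σ : Type*} (A : NFA α σ) (s : σ) (w : List α) : Prop :=
  ∃ f ∈ A.evalFrom {s} w, f ∈ A.accept

/-- Similarity of states `p ∼_A q` in a cover automaton with length bound `l`:
acceptance from `p` and from `q` agree on all words of length at most
`l - max(level(p), level(q))`. -/
def StateSim {α σ : Type*} (A : NFA α σ) (l : ℕ) (p q : σ) : Prop :=
  ∀ w : List α,
    (w.length : ℕ∞) ≤ (l : ℕ∞) - max (nfaLevel A p) (nfaLevel A q) →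
    (AccFrom A p w ↔ AccFrom A q w)

/-- Strong merge of state `q` into state `p`: transitions entering `q` are
redirected to `p`, and `q` (with its outgoing transitions) is deleted. -/
def strongMerge {α σ : Type*} (A : NFA α σ) (p q : σ) : NFA α {s : σ // s ≠ q} where
  step := fun s a => {t | (t : σ) ∈ A.step s.1 a ∨ ((t : σ) = p ∧ q ∈ A.step s.1 a)}
  start := {s | (s : σ) ∈ A.start ∨ ((s : σ) = p ∧ q ∈ A.start)}
  accept := {s | (s : σ) ∈ A.accept}

/-- Weak merge of state `q` into state `p`: `q` is collapsed onto `p`,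
consolidating both its incoming and its outgoing transitions. -/
def weakMerge {α σ : Type*} [DecidableEq σ] (A : NFA α σ) (p q : σ) :
    NFA α {s : σ // s ≠ q} where
  step := fun s a =>
    if (s : σ) = p then
      {t | (t : σ) ∈ A.step p a ∨ (t : σ) ∈ A.step q a ∨
        ((t : σ) = p ∧ (q ∈ A.step p a ∨ q ∈ A.step q a))}
    else
      {t | (t : σ) ∈ A.step s.1 a ∨ ((t : σ) = p ∧ q ∈ A.step s.1 a)}
  start := {s | (s : σ) ∈ A.start ∨ ((s : σ) = p ∧ q ∈ A.start)}
  accept := {s | (s : σ) ∈ A.accept}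


/-! ### Auxiliary material for the witness -/

private def wtr : Fin 7 → Fin 7 → Bool := fun s t =>
  (s == 0 && (t == 1 || t == 5)) || (s == 1 && t == 2) || (s == 2 && t == 3)
  || (s == 3 && (t == 3 || t == 4)) || (s == 5 && t == 6)

private def wacc : Fin 7 → Bool := fun s => s == 4 || s == 6

private def myA : NFA Unit (Fin 7) where
  step := fun s _ => {t | wtr s t}
  start := {s | s == 0}
  accept := {s | wacc s}

private def wE : ℕ → Fin 7 → Bool
  | 0 => fun t => t == 0
  | 1 => fun t => t == 1 || t == 5
  | 2 => fun t => t == 2 || t == 6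
  | 3 => fun t => t == 3
  | _+4 => fun t => t == 3 || t == 4

private lemma key_step (f g : Fin 7 → Bool) (h : ∀ t, (∃ s, f s = true ∧ wtr s t = true) ↔ g t = true) :
    myA.stepSet {t | f t} () = {t | g t} := by
  ext t
  simp only [NFA.stepSet, Set.mem_iUnion, Set.mem_setOf_eq, myA, exists_prop]
  exact h t

private lemma stepE (n : ℕ) : myA.stepSet {t | wE n t} () = {t | wE (n+1) t} := by
  match n with
  | 0 => exact key_step _ _ (by decide)
  | 1 => exact key_step _ _ (by decide)
  | 2 => exact key_step _ _ (by decide)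
  | 3 => exact key_step _ _ (by decide)
  | m+4 =>
      show myA.stepSet {t | (t == 3 || t == 4 : Bool)} () = {t | (t == 3 || t == 4 : Bool)}
      exact key_step _ _ (by decide)

private lemma evalE (n : ℕ) : myA.eval (List.replicate n ()) = {t | wE n t} := by
  induction n with
  | zero => rfl
  | succ n ih =>
      rw [List.replicate_succ']
      show myA.evalFrom myA.start _ = _
      rw [NFA.evalFrom_append]
      show myA.stepSet (myA.eval (List.replicate n ())) () = _
      rw [ih, stepE]

private lemma unitWord (w : List Unit) : w = List.replicate w.length () := by
  induction w with
  | nil => rfl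
  | cons a t ih => simp [List.replicate_succ]; exact ih

private lemma acceptsE (n : ℕ) :
    List.replicate n () ∈ myA.accepts ↔ ∃ t, wacc t = true ∧ wE n t = true := by
  rw [NFA.mem_accepts]
  show (∃ S ∈ myA.accept, S ∈ myA.eval (List.replicate n ())) ↔ _
  rw [evalE]
  constructor
  · rintro ⟨S, h1, h2⟩; exact ⟨S, h1, h2⟩
  · rintro ⟨S, h1, h2⟩; exact ⟨S, h1, h2⟩

private lemma wE5 (n : ℕ) (h : wE n 5 = true) : n = 1 := by
  match n with
  | 0 => simp [wE] at h
  | 1 => rfl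
  | 2 => simp [wE] at h
  | 3 => simp [wE] at h
  | m+4 => simp [wE] at h

private lemma wE3 (n : ℕ) (h : wE n 3 = true) : 3 ≤ n := by
  match n with
  | 0 => simp [wE] at h
  | 1 => simp [wE] at h
  | 2 => simp [wE] at h
  | 3 => exact le_refl _
  | m+4 => omega

private lemma mem_evalE (w : List Unit) (s : Fin 7) : s ∈ myA.eval w ↔ wE w.length s = true := by
  conv_lhs => rw [unitWord w, evalE]
  rfl

private lemma level5 : nfaLevel myA 5 = 1 := by
  apply le_antisymm
  · have h5 : (5 : Fin 7) ∈ myA.eval [()] := by rw [mem_evalE]; decide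
    have := iInf₂_le (f := fun (w : List Unit) (_ : w ∈ {w : List Unit | 5 ∈ myA.eval w}) => (w.length : ℕ∞)) [()] h5
    simpa [nfaLevel] using this
  · refine le_iInf₂ fun w hw => ?_
    have : w.length = 1 := wE5 _ ((mem_evalE w 5).1 hw)
    exact_mod_cast this.ge

private lemma level3 : nfaLevel myA 3 = 3 := by
  apply le_antisymm
  · have h3 : (3 : Fin 7) ∈ myA.eval (List.replicate 3 ()) := by rw [mem_evalE]; decide
    have := iInf₂_le (f := fun (w : List Unit) (_ : w ∈ {w : List Unit | 3 ∈ myA.eval w}) => (w.length : ℕ∞)) (List.replicate 3 ()) h3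
    simpa [nfaLevel] using this
  · refine le_iInf₂ fun w hw => ?_
    have : 3 ≤ w.length := wE3 _ ((mem_evalE w 3).1 hw)
    exact_mod_cast this

/-- there exist an NFA cover automaton `A` for a finite language `L`
and similar states `p ∼_A q` with `level(p) ≤ level(q)` such that weakly merging
`q` into `p` does not yield a cover automaton for `L`.
(Witness: `Σ = {a}`, `L = {a², a⁴}`, `l = 4`, the 7-state NFA of Figure 7.) -/
theorem weakMerge_can_fail :
    ∃ (A : NFA Unit (Fin 7)) (L : Language Unit) (l : ℕ) (p q : Fin 7),
      Set.Finite (L : Set (List Unit)) ∧ (∀ w ∈ L, List.length w ≤ l) ∧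
      IsCoverN A L l ∧ p ≠ q ∧ StateSim A l p q ∧
      nfaLevel A p ≤ nfaLevel A q ∧
      ¬ IsCoverN (weakMerge A p q) L l := by
  classical
  refine ⟨myA, {List.replicate 2 (), List.replicate 4 ()}, 4, 5, 3, ?_, ?_, ?_, ?_, ?_, ?_, ?_⟩
  · exact (Set.finite_singleton _).insert _
  · rintro w (rfl | rfl) <;> simp
  · -- IsCoverN
    intro w hlen
    have hw := unitWord w
    rw [hw] at hlen ⊢
    set n := w.length with hn
    clear_value n
    have hrep : ∀ m k : ℕ, List.replicate m () = List.replicate k () ↔ m = k := by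
      intro m k
      constructor
      · intro h; simpa using congrArg List.length h
      · intro h; rw [h]
    have hL : (List.replicate n () ∈ ({List.replicate 2 (), List.replicate 4 ()} : Language Unit)) ↔ (n = 2 ∨ n = 4) := by
      show List.replicate n () ∈ ({List.replicate 2 (), List.replicate 4 ()} : Set (List Unit)) ↔ _
      rw [Set.mem_insert_iff, Set.mem_singleton_iff, hrep, hrep]
    rw [hL, acceptsE]
    simp only [List.length_replicate] at hlen
    interval_cases n <;> decide
  · decide
  · -- StateSim
    intro w hw
    rw [level5, level3] at hw
    have hmax : max (1 : ℕ∞) 3 = 3 := by norm_num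
    rw [hmax] at hw
    have h43 : ((4 : ℕ) : ℕ∞) - 3 = 1 := by
      decide
    rw [h43] at hw
    have hw1 : w.length ≤ 1 := by exact_mod_cast hw
    have hAcc1 : AccFrom myA 5 [()] := by
      refine ⟨6, ?_, show wacc 6 = true from rfl⟩
      show (6 : Fin 7) ∈ myA.stepSet {5} ()
      rw [NFA.mem_stepSet]
      exact ⟨5, rfl, show wtr 5 6 = true from rfl⟩
    have hAcc3 : AccFrom myA 3 [()] := by
      refine ⟨4, ?_, show wacc 4 = true from rfl⟩
      show (4 : Fin 7) ∈ myA.stepSet {3} ()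
      rw [NFA.mem_stepSet]
      exact ⟨3, rfl, show wtr 3 4 = true from rfl⟩
    interval_cases h : w.length
    · have : w = [] := List.eq_nil_of_length_eq_zero h
      subst this
      constructor
      · rintro ⟨f, hf, hacc⟩
        rw [NFA.evalFrom_nil, Set.mem_singleton_iff] at hf
        subst hf
        exact absurd (show wacc 5 = true from hacc) (by decide)
      · rintro ⟨f, hf, hacc⟩
        rw [NFA.evalFrom_nil, Set.mem_singleton_iff] at hf
        subst hf
        exact absurd (show wacc 3 = true from hacc) (by decide)
    · have : w = [()] := by
        rw [unitWord w, h]; rfl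
      subst this
      exact iff_of_true hAcc1 hAcc3
  · rw [level5, level3]; norm_num
  · -- weak merge fails
    intro hcov
    have h3 : (List.replicate 3 () : List Unit).length ≤ 4 := by simp
    have := (hcov _ h3).1 ?_
    · rcases this with h | h
      · have := congrArg List.length h; simp at this
      · have := congrArg List.length h; simp at this
    · -- replicate 3 () accepted by weakMerge myA 5 3
      rw [NFA.mem_accepts]
      refine ⟨⟨4, by decide⟩, show wacc 4 = true from rfl, ?_⟩
      show _ ∈ (weakMerge myA 5 3).stepSet ((weakMerge myA 5 3).stepSet ((weakMerge myA 5 3).stepSet (weakMerge myA 5 3).start ()) ()) ()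
      rw [NFA.mem_stepSet]
      refine ⟨⟨5, by decide⟩, ?_, ?_⟩
      · rw [NFA.mem_stepSet]
        refine ⟨⟨5, by decide⟩, ?_, ?_⟩
        · rw [NFA.mem_stepSet]
          refine ⟨⟨0, by decide⟩, ?_, ?_⟩
          · exact Or.inl (show ((0:Fin 7) == 0) = true from rfl)
          · show _ ∈ (weakMerge myA 5 3).step ⟨0, _⟩ ()
            simp only [weakMerge]
            rw [if_neg (by decide)]
            exact Or.inl (show wtr 0 5 = true from rfl)
        · show _ ∈ (weakMerge myA 5 3).step ⟨5, _⟩ ()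
          simp only [weakMerge]
          rw [if_pos trivial]
          exact Or.inr (Or.inr ⟨rfl, Or.inr (show wtr 3 3 = true from rfl)⟩)
      · show _ ∈ (weakMerge myA 5 3).step ⟨5, _⟩ ()
        simp only [weakMerge]
        rw [if_pos trivial]
        exact Or.inr (Or.inl (show wtr 3 4 = true from rfl))
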